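/- Let K be a bounded linear operator on H with Moore–Penrose pseudoinverse P, and let F = (f_1,…,f_N) be a Parseval K-frame for H with N > n = dim H. Set L = max_{1≤i≤N} ‖f_i‖·‖P f_i‖, Λ₁ = { i : ‖f_i‖·‖P f_i‖ = L }, Λ₂ = {1,…,N} \ Λ₁, V₁ = span{ f_i : i ∈ Λ₁ } and V₂ = span{ f_i : i ∈ Λ₂ }. If V₁ ∩ V₂ = {0} and the family { f_i : i ∈ Λ₁ } is linearly independent, then the set of K-duals G = (g_1,…,g_N) of F satisfying max_{1≤i≤N} ‖f_i‖·‖g_i‖ = L is uncountable, and L is the minimum of max_{1≤i≤N} ‖f_i‖·‖g_i‖ over all K-duals G of F. -/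

import Mathlib

local notation "⟪" x ", " y "⟫" => @inner ℂ _ _ x y

set_option maxHeartbeats 2000000 in
/-- Let `K` be a bounded operator on `H` with Moore–Penrose pseudoinverse `P`
and `F` a Parseval `K`-frame with `N > n = dim H`.  With `L`, `Λ₁`, `Λ₂`, `V₁`, `V₂` as in
Statement 11: if `V₁ ∩ V₂ = {0}` and `{f_i : i ∈ Λ₁}` is linearly independent, then the set
of `K`-duals `G` of `F` with `max_i ‖f_i‖·‖g_i‖ = L` is uncountable, and `L` is the minimum
of `max_i ‖f_i‖·‖g_i‖ over all `K`-duals `G` of `F`. -/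
theorem stmt12
    {H : Type*} [NormedAddCommGroup H] [InnerProductSpace ℂ H] [FiniteDimensional ℂ H]
    (hdim : 1 ≤ Module.finrank ℂ H)
    {N : ℕ} (hN : Module.finrank ℂ H < N)
    (K P : H →L[ℂ] H)
    (hP1 : K ∘L P ∘L K = K) (hP2 : P ∘L K ∘L P = P)
    (hP3 : IsSelfAdjoint (K ∘L P)) (hP4 : IsSelfAdjoint (P ∘L K))
    (F : Fin N → H)
    (hParseval : ∀ f : H,
      ∑ i, ‖⟪F i, f⟫‖ ^ 2 = ‖ContinuousLinearMap.adjoint K f‖ ^ 2)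
    (L : ℝ) (hL : L = ⨆ i, ‖F i‖ * ‖P (F i)‖)
    (hV : Submodule.span ℂ (F '' {i | ‖F i‖ * ‖P (F i)‖ = L}) ⊓
          Submodule.span ℂ (F '' {i | ‖F i‖ * ‖P (F i)‖ ≠ L}) = ⊥)
    (hind : LinearIndependent ℂ (fun i : {i : Fin N // ‖F i‖ * ‖P (F i)‖ = L} => F i.1)) :
    ¬ Set.Countable {G : Fin N → H |
        (∀ f : H, K f = ∑ i, ⟪G i, f⟫ • F i) ∧ (⨆ i, ‖F i‖ * ‖G i‖) = L} ∧
    (∀ G : Fin N → H, (∀ f : H, K f = ∑ i, ⟪G i, f⟫ • F i) →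
        L ≤ ⨆ i, ‖F i‖ * ‖G i‖) := by
  classical
  haveI : CompleteSpace H := FiniteDimensional.complete ℂ H
  haveI : Nonempty (Fin N) := ⟨⟨0, by omega⟩⟩
  -- ══════════ Step A : the canonical dual property ══════════
  have hcanon : ∀ f : H, K f = ∑ i, ⟪P (F i), f⟫ • F i := by
    set Kd := ContinuousLinearMap.adjoint K with hKd
    set Slin : H →ₗ[ℂ] H :=
      { toFun := fun f => ∑ i, ⟪F i, f⟫ • F i
        map_add' := by
          intro x y
          simp [inner_add_right, add_smul, Finset.sum_add_distrib]
        map_smul' := by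
          intro c x
          simp [inner_smul_right, smul_smul, Finset.smul_sum] } with hSlin
    have hS : Slin = ((K ∘L Kd : H →L[ℂ] H) : H →ₗ[ℂ] H) := by
      rw [← ext_inner_map]
      intro x
      have h1 : ⟪Slin x, x⟫ = ((∑ i, ‖⟪F i, x⟫‖ ^ 2 : ℝ) : ℂ) := by
        simp only [hSlin, LinearMap.coe_mk, AddHom.coe_mk, sum_inner, inner_smul_left]
        push_cast
        refine Finset.sum_congr rfl fun i _ => ?_
        rw [← Complex.ofReal_pow, Complex.sq_norm, Complex.normSq_eq_conj_mul_self]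
      have h2 : ⟪((K ∘L Kd : H →L[ℂ] H) : H →ₗ[ℂ] H) x, x⟫ = ((‖Kd x‖ ^ 2 : ℝ) : ℂ) := by
        have : ⟪(K ∘L Kd) x, x⟫ = ⟪Kd x, Kd x⟫ := by
          simp only [ContinuousLinearMap.comp_apply, hKd]
          rw [← ContinuousLinearMap.adjoint_inner_right]
        rw [ContinuousLinearMap.coe_coe, this, inner_self_eq_norm_sq_to_K]
        norm_cast
      rw [h1, h2, hParseval x]
    have hS' : ∀ f : H, (∑ i, ⟪F i, f⟫ • F i) = K (Kd f) := by
      intro f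
      have := congrFun (congrArg (fun (T : H →ₗ[ℂ] H) => (T : H → H)) hS) f
      simpa [hSlin] using this
    intro f
    have hPd : ∀ i, ⟪P (F i), f⟫ = ⟪F i, (ContinuousLinearMap.adjoint P) f⟫ := by
      intro i
      rw [← ContinuousLinearMap.adjoint_inner_left, ContinuousLinearMap.adjoint_adjoint]
    have h3 : (∑ i, ⟪P (F i), f⟫ • F i) = K (Kd (ContinuousLinearMap.adjoint P f)) := by
      rw [← hS']
      exact Finset.sum_congr rfl fun i _ => by rw [hPd]
    have h4 : Kd (ContinuousLinearMap.adjoint P f) = P (K f) := by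
      have hc : Kd ∘L ContinuousLinearMap.adjoint P = ContinuousLinearMap.adjoint (P ∘L K) := by
        rw [ContinuousLinearMap.adjoint_comp]
      have h5 := hP4.adjoint_eq
      calc Kd (ContinuousLinearMap.adjoint P f)
          = (Kd ∘L ContinuousLinearMap.adjoint P) f := rfl
        _ = (ContinuousLinearMap.adjoint (P ∘L K)) f := by rw [hc]
        _ = (P ∘L K) f := by rw [h5]
        _ = P (K f) := rfl
    rw [h3, h4]
    have : K (P (K f)) = (K ∘L P ∘L K) f := rfl
    rw [this, hP1]
  -- ══════════ Step B : coefficients of a dependence relation vanish on Λ₁ ══════════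
  have hrel : ∀ c : Fin N → ℂ, ∑ i, c i • F i = 0 →
      ∀ i, ‖F i‖ * ‖P (F i)‖ = L → c i = 0 := by
    intro c hc
    set p : Fin N → Prop := fun i => ‖F i‖ * ‖P (F i)‖ = L with hp
    have hsplit : ∑ i ∈ Finset.univ.filter p, c i • F i
        + ∑ i ∈ Finset.univ.filter (fun i => ¬ p i), c i • F i = 0 := by
      rw [Finset.sum_filter_add_sum_filter_not]; exact hc
    set x := ∑ i ∈ Finset.univ.filter p, c i • F i with hx
    have hx1 : x ∈ Submodule.span ℂ (F '' {i | ‖F i‖ * ‖P (F i)‖ = L}) := by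
      refine Submodule.sum_mem _ fun i hi => Submodule.smul_mem _ _ (Submodule.subset_span ?_)
      exact ⟨i, by simpa using (Finset.mem_filter.mp hi).2, rfl⟩
    have hx2 : x ∈ Submodule.span ℂ (F '' {i | ‖F i‖ * ‖P (F i)‖ ≠ L}) := by
      have : x = - ∑ i ∈ Finset.univ.filter (fun i => ¬ p i), c i • F i := by
        rw [eq_neg_iff_add_eq_zero]; exact hsplit
      rw [this]
      refine Submodule.neg_mem _ (Submodule.sum_mem _ fun i hi =>
        Submodule.smul_mem _ _ (Submodule.subset_span ?_))
      exact ⟨i, by simpa using (Finset.mem_filter.mp hi).2, rfl⟩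
    have hx0 : x = 0 := by
      have : x ∈ (⊥ : Submodule ℂ H) := hV ▸ Submodule.mem_inf.mpr ⟨hx1, hx2⟩
      simpa using this
    have hsub : ∑ i : {i : Fin N // p i}, c i.1 • F i.1 = 0 := by
      rw [← hx0, hx]
      exact (Finset.sum_subtype (Finset.univ.filter p)
        (fun x => by simp only [Finset.mem_filter, Finset.mem_univ, true_and])
        (fun i => c i • F i)).symm
    intro i hi
    exact Fintype.linearIndependent_iff.mp hind (fun i => c i.1) hsub ⟨i, hi⟩
  -- ══════════ Step C : every K-dual agrees with the canonical one on Λ₁ ══════════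
  have hdual_eq : ∀ G : Fin N → H, (∀ f : H, K f = ∑ i, ⟪G i, f⟫ • F i) →
      ∀ j, ‖F j‖ * ‖P (F j)‖ = L → G j = P (F j) := by
    intro G hG j hj
    set W : Submodule ℂ H := Submodule.span ℂ (Set.range fun i : {i : Fin N // i ≠ j} => F i.1)
      with hW
    have hFjW : F j ∉ W := by
      intro hmem
      rw [hW, Submodule.mem_span_range_iff_exists_fun] at hmem
      obtain ⟨a, ha⟩ := hmem
      set b : Fin N → ℂ := fun i => if h : i = j then -1 else a ⟨i, h⟩ with hb
      have hbsum : ∑ i, b i • F i = 0 := by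
        rw [← Finset.sum_erase_add _ _ (Finset.mem_univ j)]
        have h1 : b j = -1 := by simp [hb]
        have h2 : ∑ i ∈ Finset.univ.erase j, b i • F i
            = ∑ i : {i : Fin N // i ≠ j}, a i • F i.1 := by
          rw [Finset.sum_subtype (p := fun i => i ≠ j) (Finset.univ.erase j)
            (fun x => by simp only [Finset.mem_erase, Finset.mem_univ, and_true])
            (fun i => b i • F i)]
          refine Finset.sum_congr rfl fun i hi => ?_
          congr 1
          simp only [hb, dif_neg i.2, Subtype.coe_eta]
        rw [h2, ha, h1]
        simp
      have := hrel b hbsum j hj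
      rw [hb] at this
      simp at this
    obtain ⟨a, haW, w, hwW, hsum⟩ := W.exists_add_mem_mem_orthogonal (F j)
    have hwne : w ≠ 0 := by
      intro h0
      apply hFjW
      rw [hsum, h0, add_zero]; exact haW
    have hwFi : ∀ i : Fin N, i ≠ j → ⟪w, F i⟫ = 0 := by
      intro i hi
      have hmem : F i ∈ W := Submodule.subset_span ⟨⟨i, hi⟩, rfl⟩
      have h0 := hwW (F i) hmem
      rw [← inner_conj_symm, h0, map_zero]
    have hwFj : ⟪w, F j⟫ = (‖w‖ : ℂ) ^ 2 := by
      rw [hsum, inner_add_right]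
      have h1 : ⟪w, a⟫ = 0 := by
        rw [← inner_conj_symm, hwW a haW]
        simp
      rw [h1, zero_add, inner_self_eq_norm_sq_to_K]
      norm_cast
    have hdiff : ∀ f : H, ∑ i, ⟪G i - P (F i), f⟫ • F i = 0 := by
      intro f
      have h1 := hG f
      have h2 := hcanon f
      have h3 : ∑ i, ⟪G i, f⟫ • F i - ∑ i, ⟪P (F i), f⟫ • F i = 0 := by
        rw [← h1, ← h2, sub_self]
      rw [← Finset.sum_sub_distrib] at h3
      rw [← h3]
      refine Finset.sum_congr rfl fun i _ => ?_
      rw [inner_sub_left, sub_smul]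
    have hzero : ∀ f : H, ⟪G j - P (F j), f⟫ = 0 := by
      intro f
      have h1 : ⟪w, ∑ i, ⟪G i - P (F i), f⟫ • F i⟫ = 0 := by rw [hdiff f, inner_zero_right]
      rw [inner_sum] at h1
      simp only [inner_smul_right] at h1
      rw [Finset.sum_eq_single j (fun i _ hi => by rw [hwFi i hi, mul_zero])
        (fun h => absurd (Finset.mem_univ j) h)] at h1
      rw [hwFj] at h1
      have h2 : ((‖w‖ : ℂ)) ^ 2 ≠ 0 := by
        simp only [ne_eq, pow_eq_zero_iff, Complex.ofReal_eq_zero, norm_eq_zero]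
        exact fun h => hwne (by simpa using h)
      rcases mul_eq_zero.mp h1 with h | h
      · exact h
      · exact absurd h h2
    have := hzero (G j - P (F j))
    rw [inner_self_eq_zero] at this
    exact sub_eq_zero.mp this
  -- ══════════ Step D : the maximum is attained ══════════
  obtain ⟨j, hjmax⟩ := Finite.exists_max (fun i : Fin N => ‖F i‖ * ‖P (F i)‖)
  have hLj : ‖F j‖ * ‖P (F j)‖ = L := by
    rw [hL]
    exact le_antisymm
      (le_ciSup (f := fun i => ‖F i‖ * ‖P (F i)‖) (Set.Finite.bddAbove (Set.finite_range _)) j)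
      (ciSup_le hjmax)
  have hle : ∀ i, ‖F i‖ * ‖P (F i)‖ ≤ L := fun i => hLj ▸ hjmax i
  constructor
  -- ══════════ Part 1 : uncountability ══════════
  · set p : Fin N → Prop := fun i => ‖F i‖ * ‖P (F i)‖ = L with hp
    have hnli : ¬ LinearIndependent ℂ F := by
      intro h
      have := h.fintype_card_le_finrank
      simp only [Fintype.card_fin] at this
      omega
    obtain ⟨c, hc0, i₀, hci₀⟩ := Fintype.not_linearIndependent_iff.mp hnli
    have hcz : ∀ i, p i → c i = 0 := fun i hi => hrel c hc0 i hi
    have hpi₀ : ¬ p i₀ := fun h => hci₀ (hcz _ h)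
    haveI : Nontrivial H := by
      apply Module.nontrivial_of_finrank_pos (R := ℂ)
      omega
    obtain ⟨u₀, hu₀⟩ := exists_ne (0 : H)
    set u : H := (‖u₀‖⁻¹ : ℝ) • u₀ with hu
    have hunorm : ‖u‖ = 1 := by
      rw [hu, norm_smul, norm_inv, norm_norm, inv_mul_cancel₀ (norm_ne_zero_iff.mpr hu₀)]
    have hune : u ≠ 0 := by
      intro h
      rw [← norm_eq_zero, hunorm] at h
      norm_num at h
    set s₂ : Finset (Fin N) := Finset.univ.filter (fun i => ¬ p i) with hs₂
    have hs₂ne : s₂.Nonempty := ⟨i₀, by simp [hs₂, hpi₀]⟩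
    set q : Fin N → ℝ := fun i => (L - ‖F i‖ * ‖P (F i)‖) / (‖F i‖ * ‖c i‖ + 1)
      with hq
    set ε : ℝ := (s₂.image q).min' (hs₂ne.image q) with hε
    have hεpos : 0 < ε := by
      rw [hε]
      apply (Finset.lt_min'_iff _ _).mpr
      intro b hb
      obtain ⟨i, hi, rfl⟩ := Finset.mem_image.mp hb
      have hi' : ¬ p i := by simpa [hs₂] using hi
      have h1 : 0 < L - ‖F i‖ * ‖P (F i)‖ := by
        have := lt_of_le_of_ne (hle i) hi'
        linarith
      have h2 : (0:ℝ) < ‖F i‖ * ‖c i‖ + 1 := by positivity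
      exact div_pos h1 h2
    set Gt : ℝ → Fin N → H := fun t i => P (F i) + ((t : ℂ) * (starRingEnd ℂ) (c i)) • u
      with hGt
    have hdualt : ∀ t : ℝ, ∀ f : H, K f = ∑ i, ⟪Gt t i, f⟫ • F i := by
      intro t f
      have : ∀ i, ⟪Gt t i, f⟫ • F i
          = ⟪P (F i), f⟫ • F i + ((t : ℂ) * ⟪u, f⟫) • (c i • F i) := by
        intro i
        rw [hGt]
        simp only [inner_add_left, inner_smul_left, add_smul, smul_smul]
        congr 2
        rw [map_mul, Complex.conj_conj, Complex.conj_ofReal]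
        ring
      simp only [this, Finset.sum_add_distrib, ← Finset.smul_sum, hc0, smul_zero, add_zero]
      exact hcanon f
    have hGtnorm : ∀ t ∈ Set.Ioc (0:ℝ) ε, (⨆ i, ‖F i‖ * ‖Gt t i‖) = L := by
      intro t ht
      have hboundall : ∀ i, ‖F i‖ * ‖Gt t i‖ ≤ L := by
        intro i
        by_cases hi : p i
        · have : Gt t i = P (F i) := by
            rw [hGt]
            simp [hcz i hi]
          rw [this]
          exact hle i
        · have hqi : ε ≤ q i := Finset.min'_le _ _ (Finset.mem_image_of_mem q (by simp [hs₂, hi]))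
          have hnorm : ‖Gt t i‖ ≤ ‖P (F i)‖ + t * ‖c i‖ := by
            rw [hGt]
            refine (norm_add_le _ _).trans ?_
            rw [norm_smul, hunorm, mul_one]
            have : ‖(t : ℂ) * (starRingEnd ℂ) (c i)‖ = t * ‖c i‖ := by
              rw [norm_mul]
              simp [Complex.norm_real, abs_of_pos ht.1]
            rw [this]
          have h2 : ‖F i‖ * ‖Gt t i‖ ≤ ‖F i‖ * ‖P (F i)‖ + t * (‖F i‖ * ‖c i‖) :=
            by nlinarith [norm_nonneg (F i), norm_nonneg (Gt t i)]
          have h3 : t * (‖F i‖ * ‖c i‖) ≤ ε * (‖F i‖ * ‖c i‖ + 1) := by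
            have hcab : (0:ℝ) ≤ ‖F i‖ * ‖c i‖ := by positivity
            nlinarith [ht.1.le, ht.2]
          have h4 : ε * (‖F i‖ * ‖c i‖ + 1) ≤ L - ‖F i‖ * ‖P (F i)‖ := by
            have hden : (0:ℝ) < ‖F i‖ * ‖c i‖ + 1 := by positivity
            have hq' : q i * (‖F i‖ * ‖c i‖ + 1) = L - ‖F i‖ * ‖P (F i)‖ := by
              rw [hq]
              field_simp
            nlinarith
          linarith
      have hat : ‖F j‖ * ‖Gt t j‖ = L := by
        have : Gt t j = P (F j) := by
          rw [hGt]; simp [hcz j hLj]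
        rw [this, hLj]
      refine le_antisymm (ciSup_le hboundall) ?_
      calc L = ‖F j‖ * ‖Gt t j‖ := hat.symm
        _ ≤ ⨆ i, ‖F i‖ * ‖Gt t i‖ :=
            le_ciSup (f := fun i => ‖F i‖ * ‖Gt t i‖)
              (Set.Finite.bddAbove (Set.finite_range _)) j
    have hinj : Function.Injective Gt := by
      intro t t' htt
      have h1 := congrFun htt i₀
      rw [hGt] at h1
      simp only [add_right_inj] at h1
      have h2 : (((t : ℂ) - (t' : ℂ)) * (starRingEnd ℂ) (c i₀)) • u = 0 := by
        rw [sub_mul, sub_smul, h1, sub_self]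
      rcases smul_eq_zero.mp h2 with h | h
      · rcases mul_eq_zero.mp h with h' | h'
        · have : (t : ℂ) = (t' : ℂ) := sub_eq_zero.mp h'
          exact_mod_cast this
        · exact absurd h' (by simpa using hci₀)
      · exact absurd h hune
    intro hcnt
    have hsub : Set.Ioc (0:ℝ) ε ⊆ Gt ⁻¹' {G : Fin N → H |
        (∀ f : H, K f = ∑ i, ⟪G i, f⟫ • F i) ∧ (⨆ i, ‖F i‖ * ‖G i‖) = L} := by
      intro t ht
      exact ⟨hdualt t, hGtnorm t ht⟩
    have hIoc : (Set.Ioc (0:ℝ) ε).Countable := (hcnt.preimage hinj).mono hsub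
    have hcard : (Cardinal.mk (Set.Ioc (0:ℝ) ε)) ≤ Cardinal.aleph0 :=
      Cardinal.mk_le_aleph0_iff.mpr (Set.countable_coe_iff.mpr hIoc)
    rw [Cardinal.mk_Ioc_real hεpos] at hcard
    exact absurd hcard Cardinal.aleph0_lt_continuum.not_ge
  -- ══════════ Part 2 : minimality ══════════
  · intro G hG
    have hGj : G j = P (F j) := hdual_eq G hG j hLj
    calc L = ‖F j‖ * ‖G j‖ := by rw [hGj, hLj]
      _ ≤ ⨆ i, ‖F i‖ * ‖G i‖ :=
          le_ciSup (f := fun i => ‖F i‖ * ‖G i‖)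
            (Set.Finite.bddAbove (Set.finite_range _)) j
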